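/- Let i be a positive integer with p² ∤ i, let u ≥ 0 be an integer, and set d = p^{2u}·i. Then for every integer n ≥ u, T_n(f_d) = Σ_{t=0}^{n−u} (−i/p)^{n−u−t}·p^u·f_{p^{2t}·i} + Σ_{t=1}^{u} p^{u−t}·f_{p^{2n−2u+4t}·i}. -/

import Mathlib

namespace Stmt3Aux

theorem modInt (M : Type*) [AddCommGroup M] (inst : Module ℤ M) :
    inst = AddCommGroup.toIntModule M :=
  @Subsingleton.elim _ (letI := AddCommGroup.uniqueIntModule (M := M); inferInstance) _ _

variable {M : Type*} [AddCommGroup M] [instM : Module ℤ M]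

/-- `FF f p i t` is `f_{p^{2t} i}`. -/
def FF (f : ℕ → M) (p i t : ℕ) : M := f (p ^ (2 * t) * i)

theorem FFc (f : ℕ → M) (p i : ℕ) {c c' : ℤ} {a b : ℕ} (hc : c = c') (hab : a = b) :
    c • FF f p i a = c' • FF f p i b := by rw [hc, hab]

variable {p : ℕ} [Fact p.Prime] (f : ℕ → M) (T : M →ₗ[ℤ] M)
  (hT : ∀ d : ℕ, 0 < d →
      T (f d) = (p : ℤ) • (if p ^ 2 ∣ d then f (d / p ^ 2) else 0)
        + (legendreSym p (-(d : ℤ))) • f d + f (p ^ 2 * d))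
  (i : ℕ) (hi : 0 < i)

include hT hi

/-- Action of `T` on `f_{p^{2(m+1)} i}`. -/
theorem step (m : ℕ) :
    T (FF f p i (m + 1)) = (p : ℤ) • FF f p i m + FF f p i (m + 2) := by
  have hppos : 0 < p := (Fact.out : p.Prime).pos
  have hpos : 0 < p ^ (2 * (m + 1)) * i :=
    Nat.mul_pos (pow_pos hppos _) hi
  have h := hT _ hpos
  have hdvd : p ^ 2 ∣ p ^ (2 * (m + 1)) * i :=
    dvd_mul_of_dvd_left (pow_dvd_pow p (by omega)) i
  rw [if_pos hdvd] at h
  have hdiv : p ^ (2 * (m + 1)) * i / p ^ 2 = p ^ (2 * m) * i := by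
    have e : p ^ (2 * (m + 1)) * i = p ^ 2 * (p ^ (2 * m) * i) := by ring
    rw [e, Nat.mul_div_cancel_left _ (pow_pos hppos _)]
  have hleg : legendreSym p (-((p ^ (2 * (m + 1)) * i : ℕ) : ℤ)) = 0 := by
    rw [legendreSym.eq_zero_iff]
    push_cast
    simp [ZMod.natCast_self, zero_pow (by omega : 2 * (m + 1) ≠ 0)]
  rw [hdiv, hleg, zero_smul, add_zero] at h
  have e2 : p ^ 2 * (p ^ (2 * (m + 1)) * i) = p ^ (2 * (m + 2)) * i := by ring
  rw [e2] at h
  exact h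

/-- Action of `T` on `f_i` (for `p² ∤ i`). -/
theorem base0 (hip : ¬ p ^ 2 ∣ i) :
    T (FF f p i 0) = (legendreSym p (-(i : ℤ))) • FF f p i 0 + FF f p i 1 := by
  have h := hT i hi
  rw [if_neg hip] at h
  simp only [zsmul_zero, zero_add] at h
  show T (f (p ^ (2 * 0) * i)) = _ • f (p ^ (2 * 0) * i) + f (p ^ (2 * 1) * i)
  rw [show p ^ (2 * 0) * i = i by norm_num, show p ^ (2 * 1) * i = p ^ 2 * i by norm_num]
  exact h

variable (Tn : ℕ → M →ₗ[ℤ] M)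
  (hTn0 : Tn 0 = LinearMap.id) (hTn1 : Tn 1 = T)
  (hTnrec : ∀ n : ℕ, Tn (n + 2) = T ∘ₗ Tn (n + 1) - (p : ℤ) • Tn n)

include hTn0 hTn1 hTnrec

/-- Formula for `T_n f_{p^{2(n+j)} i}` (the regime `n ≤ u`, with `u = n + j`). -/
theorem lemA : ∀ n j : ℕ, Tn n (FF f p i (n + j)) =
    ∑ t ∈ Finset.range (n + 1), ((p : ℤ) ^ (n - t)) • FF f p i (j + 2 * t) := by
  obtain rfl := modInt M instM
  intro n
  induction n using Nat.twoStepInduction with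
  | zero =>
    intro j
    simp [hTn0, Finset.sum_range_one]
  | one =>
    intro j
    rw [hTn1]
    rw [Finset.sum_range_succ, Finset.sum_range_one]
    have h := step f T hT i hi j
    rw [show (1 : ℕ) + j = j + 1 from by omega]
    rw [h]
    norm_num
  | more m ih1 ih2 =>
    intro j
    rw [hTnrec m]
    simp only [LinearMap.sub_apply, LinearMap.comp_apply, LinearMap.smul_apply]
    have h2 : Tn (m + 1) (FF f p i (m + 2 + j)) =
        ∑ t ∈ Finset.range (m + 2), ((p : ℤ) ^ (m + 1 - t)) • FF f p i (j + 1 + 2 * t) := by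
      have h := ih2 (j + 1)
      rwa [show m + 1 + (j + 1) = m + 2 + j from by omega] at h
    have h1 : Tn m (FF f p i (m + 2 + j)) =
        ∑ t ∈ Finset.range (m + 1), ((p : ℤ) ^ (m - t)) • FF f p i (j + 2 + 2 * t) := by
      have h := ih1 (j + 2)
      rwa [show m + (j + 2) = m + 2 + j from by omega] at h
    rw [h2, h1, map_sum]
    have hTt : ∀ t ∈ Finset.range (m + 2),
        T (((p : ℤ) ^ (m + 1 - t)) • FF f p i (j + 1 + 2 * t)) =
          ((p : ℤ) ^ (m + 2 - t)) • FF f p i (j + 2 * t)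
            + ((p : ℤ) ^ (m + 1 - t)) • FF f p i (j + 2 + 2 * t) := by
      intro t ht
      rw [T.map_smul]
      have h := step f T hT i hi (j + 2 * t)
      rw [show j + 2 * t + 1 = j + 1 + 2 * t from by omega,
        show j + 2 * t + 2 = j + 2 + 2 * t from by omega] at h
      rw [h, smul_add, smul_smul, ← pow_succ]
      congr 3
      have := Finset.mem_range.mp ht
      omega
    rw [Finset.sum_congr rfl hTt, Finset.sum_add_distrib]
    have eC : (p : ℤ) • ∑ t ∈ Finset.range (m + 1),
        ((p : ℤ) ^ (m - t)) • FF f p i (j + 2 + 2 * t) =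
        ∑ t ∈ Finset.range (m + 1), ((p : ℤ) ^ (m + 1 - t)) • FF f p i (j + 2 + 2 * t) := by
      rw [Finset.smul_sum]
      refine Finset.sum_congr rfl (fun t ht => ?_)
      rw [smul_smul, ← pow_succ']
      congr 2
      have := Finset.mem_range.mp ht
      omega
    have eB : ∑ t ∈ Finset.range (m + 2), ((p : ℤ) ^ (m + 1 - t)) • FF f p i (j + 2 + 2 * t) =
        (∑ t ∈ Finset.range (m + 1), ((p : ℤ) ^ (m + 1 - t)) • FF f p i (j + 2 + 2 * t))
          + FF f p i (j + 2 + 2 * (m + 1)) := by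
      rw [Finset.sum_range_succ]
      norm_num
    have eT : ∑ t ∈ Finset.range (m + 2 + 1), ((p : ℤ) ^ (m + 2 - t)) • FF f p i (j + 2 * t) =
        (∑ t ∈ Finset.range (m + 2), ((p : ℤ) ^ (m + 2 - t)) • FF f p i (j + 2 * t))
          + FF f p i (j + 2 * (m + 2)) := by
      rw [Finset.sum_range_succ]
      norm_num
    rw [eC, eB, eT, show j + 2 + 2 * (m + 1) = j + 2 * (m + 2) from by omega]
    abel

/-- Formula for `T_{u+k} f_{p^{2u} i}` (the regime `n ≥ u`, with `n = u + k`). -/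
theorem lemB (hip : ¬ p ^ 2 ∣ i) : ∀ k u : ℕ, Tn (u + k) (FF f p i u) =
    ∑ t ∈ Finset.range (k + 1),
      ((legendreSym p (-(i : ℤ))) ^ (k - t) * (p : ℤ) ^ u) • FF f p i t
    + ∑ t ∈ Finset.Icc 1 u, ((p : ℤ) ^ (u - t)) • FF f p i (k + 2 * t) := by
  obtain rfl := modInt M instM
  set ε : ℤ := legendreSym p (-(i : ℤ)) with hε
  have b0 : T (FF f p i 0) = ε • FF f p i 0 + FF f p i 1 := by
    rw [base0 f T hT i hi hip, ← hε]
  intro k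
  induction k using Nat.twoStepInduction with
  | zero =>
    intro u
    have hA := lemA f T hT i hi Tn hTn0 hTn1 hTnrec u 0
    simp only [Nat.add_zero] at hA ⊢
    rw [hA, Finset.sum_range_succ' (fun t => ((p : ℤ) ^ (u - t)) • FF f p i (0 + 2 * t)) u,
      Finset.sum_range_one, ← Finset.Ico_add_one_right_eq_Icc, Finset.sum_Ico_eq_sum_range]
    simp only [Nat.add_sub_cancel]
    have e1 : ∀ t ∈ Finset.range u,
        ((p : ℤ) ^ (u - (t + 1))) • FF f p i (0 + 2 * (t + 1)) =
        ((p : ℤ) ^ (u - (1 + t))) • FF f p i (0 + 2 * (1 + t)) :=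
      fun t ht => FFc f p i (by rw [show u - (t + 1) = u - (1 + t) from by omega]) (by omega)
    rw [Finset.sum_congr rfl e1]
    norm_num [add_comm]
  | one =>
    intro u
    rcases u with _ | v
    · rw [show (0 : ℕ) + 1 = 1 from rfl, hTn1, b0,
        Finset.sum_range_succ, Finset.sum_range_one,
        Finset.Icc_eq_empty (by omega : ¬(1 : ℕ) ≤ 0), Finset.sum_empty]
      norm_num
    · rw [show v + 1 + 1 = v + 2 from rfl, hTnrec v]
      simp only [LinearMap.sub_apply, LinearMap.comp_apply, LinearMap.smul_apply]
      have h2 := lemA f T hT i hi Tn hTn0 hTn1 hTnrec (v + 1) 0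
      have h1 := lemA f T hT i hi Tn hTn0 hTn1 hTnrec v 1
      simp only [Nat.add_zero] at h2
      have h2' : Tn (v + 1) (FF f p i (v + 1)) =
          (∑ t ∈ Finset.range (v + 1), ((p : ℤ) ^ (v - t)) • FF f p i (2 * t + 1 + 1))
            + ((p : ℤ) ^ (v + 1)) • FF f p i 0 := by
        rw [h2, Finset.sum_range_succ'
          (fun t => ((p : ℤ) ^ (v + 1 - t)) • FF f p i (0 + 2 * t)) (v + 1)]
        congr 1
        exact Finset.sum_congr rfl fun t ht =>
          FFc f p i (by rw [show v + 1 - (t + 1) = v - t from by omega]) (by omega)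
      rw [h2', h1, map_add, map_sum, T.map_smul, b0]
      have hTt : ∀ t ∈ Finset.range (v + 1),
          T (((p : ℤ) ^ (v - t)) • FF f p i (2 * t + 1 + 1)) =
            (p : ℤ) • (((p : ℤ) ^ (v - t)) • FF f p i (1 + 2 * t))
              + ((p : ℤ) ^ (v - t)) • FF f p i (3 + 2 * t) := by
        intro t ht
        rw [T.map_smul, step f T hT i hi (2 * t + 1), smul_add, smul_comm,
          show 2 * t + 1 + 2 = 3 + 2 * t from by omega,
          show 2 * t + 1 = 1 + 2 * t from by omega]
      rw [Finset.sum_congr rfl hTt, Finset.sum_add_distrib]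
      have c0 : ((p : ℤ) ^ (v + 1)) • (ε • FF f p i 0 + FF f p i 1) =
          (ε ^ (1 - 0) * (p : ℤ) ^ (v + 1)) • FF f p i 0
            + (ε ^ (1 - 1) * (p : ℤ) ^ (v + 1)) • FF f p i 1 := by
        rw [smul_add, smul_smul]
        norm_num [mul_comm]
      rw [c0, Finset.smul_sum]
      conv_rhs => rw [Finset.sum_range_succ, Finset.sum_range_one,
        ← Finset.Ico_add_one_right_eq_Icc, Finset.sum_Ico_eq_sum_range]
      simp only [Nat.add_sub_cancel]
      have e2 : ∀ t ∈ Finset.range (v + 1),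
          ((p : ℤ) ^ (v + 1 - (1 + t))) • FF f p i (1 + 2 * (1 + t)) =
          ((p : ℤ) ^ (v - t)) • FF f p i (3 + 2 * t) :=
        fun t ht => FFc f p i (by rw [show v + 1 - (1 + t) = v - t from by omega]) (by omega)
      conv_rhs => rw [Finset.sum_congr rfl e2]
      abel
  | more k ih1 ih2 =>
    intro u
    rw [show u + (k + 2) = u + k + 2 from by omega, hTnrec (u + k)]
    simp only [LinearMap.sub_apply, LinearMap.comp_apply, LinearMap.smul_apply]
    rw [show u + k + 1 = u + (k + 1) from by omega, ih2 u, ih1 u]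
    have haveS : ∑ t ∈ Finset.range (k + 1 + 1), (ε ^ (k + 1 - t) * (p : ℤ) ^ u) • FF f p i t =
        (∑ t ∈ Finset.range (k + 1), (ε ^ (k - t) * (p : ℤ) ^ u) • FF f p i (t + 1))
          + (ε ^ (k + 1) * (p : ℤ) ^ u) • FF f p i 0 := by
      rw [Finset.sum_range_succ' (fun t => (ε ^ (k + 1 - t) * (p : ℤ) ^ u) • FF f p i t) (k + 1)]
      congr 1
      exact Finset.sum_congr rfl fun t ht =>
        FFc f p i (by rw [show k + 1 - (t + 1) = k - t from by omega]) rfl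
    rw [haveS, map_add, map_add, map_sum, map_sum, T.map_smul, b0]
    have hTt : ∀ t ∈ Finset.range (k + 1),
        T ((ε ^ (k - t) * (p : ℤ) ^ u) • FF f p i (t + 1)) =
          (p : ℤ) • ((ε ^ (k - t) * (p : ℤ) ^ u) • FF f p i t)
            + (ε ^ (k - t) * (p : ℤ) ^ u) • FF f p i (t + 2) := by
      intro t ht
      rw [T.map_smul, step f T hT i hi t, smul_add, smul_comm]
    rw [Finset.sum_congr rfl hTt]
    have hIc : ∀ t ∈ Finset.Icc 1 u,
        T (((p : ℤ) ^ (u - t)) • FF f p i (k + 1 + 2 * t)) =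
          (p : ℤ) • (((p : ℤ) ^ (u - t)) • FF f p i (k + 2 * t))
            + ((p : ℤ) ^ (u - t)) • FF f p i (k + 2 + 2 * t) := by
      intro t ht
      rw [show k + 1 + 2 * t = k + 2 * t + 1 from by omega, T.map_smul,
        step f T hT i hi (k + 2 * t), smul_add, smul_comm,
        show k + 2 * t + 2 = k + 2 + 2 * t from by omega]
    rw [Finset.sum_congr rfl hIc, Finset.sum_add_distrib, Finset.sum_add_distrib]
    have c0 : (ε ^ (k + 1) * (p : ℤ) ^ u) • (ε • FF f p i 0 + FF f p i 1) =
        (ε ^ (k + 2) * (p : ℤ) ^ u) • FF f p i 0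
          + (ε ^ (k + 1) * (p : ℤ) ^ u) • FF f p i 1 := by
      rw [smul_add, smul_smul]
      congr 2
      ring
    rw [c0, smul_add, Finset.smul_sum, Finset.smul_sum]
    have haveT : ∑ t ∈ Finset.range (k + 2 + 1), (ε ^ (k + 2 - t) * (p : ℤ) ^ u) • FF f p i t =
        ((∑ t ∈ Finset.range (k + 1), (ε ^ (k - t) * (p : ℤ) ^ u) • FF f p i (t + 2))
          + (ε ^ (k + 2 - (0 + 1)) * (p : ℤ) ^ u) • FF f p i (0 + 1))
          + (ε ^ (k + 2) * (p : ℤ) ^ u) • FF f p i 0 := by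
      rw [Finset.sum_range_succ'
          (fun t => (ε ^ (k + 2 - t) * (p : ℤ) ^ u) • FF f p i t) (k + 1 + 1),
        Finset.sum_range_succ'
          (fun t => (ε ^ (k + 2 - (t + 1)) * (p : ℤ) ^ u) • FF f p i (t + 1)) (k + 1)]
      congr 1
      congr 1
      exact Finset.sum_congr rfl fun t ht =>
        FFc f p i (by rw [show k + 2 - (t + 1 + 1) = k - t from by omega]) (by omega)
    conv_rhs => rw [haveT]
    have e3 : (ε ^ (k + 2 - (0 + 1)) * (p : ℤ) ^ u) • FF f p i (0 + 1) =
        (ε ^ (k + 1) * (p : ℤ) ^ u) • FF f p i 1 :=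
      FFc f p i (by rw [show k + 2 - (0 + 1) = k + 1 from by omega]) (by omega)
    rw [e3]
    abel

end Stmt3Aux

/-- Action of the normalized Hecke operators `T(p^{2n})` on Zagier's weight 1/2
forms `f_d`, for `d = p^{2u}·i` with `p² ∤ i` and `n ≥ u`. -/
theorem stmt_3 {p : ℕ} [Fact p.Prime] (hp : p ≠ 2)
    {M : Type*} [AddCommGroup M] [Module ℤ M]
    (f : ℕ → M) (T : M →ₗ[ℤ] M)
    (hT : ∀ d : ℕ, 0 < d →
      T (f d) = (p : ℤ) • (if p ^ 2 ∣ d then f (d / p ^ 2) else 0)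
        + (legendreSym p (-(d : ℤ))) • f d + f (p ^ 2 * d))
    (Tn : ℕ → M →ₗ[ℤ] M)
    (hTn0 : Tn 0 = LinearMap.id) (hTn1 : Tn 1 = T)
    (hTnrec : ∀ n : ℕ, Tn (n + 2) = T ∘ₗ Tn (n + 1) - (p : ℤ) • Tn n)
    (i u : ℕ) (hi : 0 < i) (hip : ¬ p ^ 2 ∣ i)
    (d : ℕ) (hd : d = p ^ (2 * u) * i)
    (n : ℕ) (hn : u ≤ n) :
    Tn n (f d) =
      ∑ t ∈ Finset.range (n - u + 1),
        ((legendreSym p (-(i : ℤ))) ^ (n - u - t) * (p : ℤ) ^ u) •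
          f (p ^ (2 * t) * i)
      + ∑ t ∈ Finset.Icc 1 u,
          ((p : ℤ) ^ (u - t)) • f (p ^ (2 * (n - u) + 4 * t) * i) := by
  obtain rfl := Stmt3Aux.modInt M ‹Module ℤ M›
  subst hd
  obtain ⟨k, rfl⟩ := Nat.exists_eq_add_of_le hn
  have h := Stmt3Aux.lemB f T hT i hi Tn hTn0 hTn1 hTnrec hip k u
  simp only [Stmt3Aux.FF] at h
  rw [show u + k - u = k from by omega, h]
  congr 1
  refine Finset.sum_congr rfl (fun t ht => ?_)
  rw [show 2 * (k + 2 * t) = 2 * k + 4 * t from by omega]
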